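/- Let (W,S) be a finite Coxeter system of rank m. The extensions of rank at least m−r form a basis of the order-r Coxeter code: C_W(r) = span{E_w : w ∈ W, d(w) ≤ r}, and hence dim C_W(r) = Σ_{i=0}^r ⟨W,i⟩, where ⟨W,i⟩ is the number of elements of W with descent number i. -/

import Mathlib

open Pointwise

/-- The order-`r` Coxeter code of type `(W,S)`: the `F₂`-span of the indicator
functions of standard cosets `σ⟨J⟩` of rank `m - r` (`m` the rank of the system). -/
noncomputable def coxeterCode {B W : Type*} [Fintype B] [Group W] [Fintype W]
    {M : CoxeterMatrix B} (cs : CoxeterSystem M W) (r : ℤ) :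
    Submodule (ZMod 2) (W → ZMod 2) :=
  Submodule.span (ZMod 2)
    {f | ∃ (σ : W) (J : Finset B), (J.card : ℤ) = (Fintype.card B : ℤ) - r ∧
      f = Set.indicator (σ • (Subgroup.closure (cs.simple '' ↑J) : Set W)) (fun _ => 1)}

/-- The extension `E_w` of `w`: the indicator of the coset `w⟨S∖D(w)⟩`. -/
noncomputable def coxeterExtension {B W : Type*} [Group W]
    {M : CoxeterMatrix B} (cs : CoxeterSystem M W) (w : W) : W → ZMod 2 :=
  Set.indicator (w • (Subgroup.closure (cs.simple '' {i : B | ¬ cs.IsRightDescent w i}) : Set W))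
    (fun _ => 1)

/-- The (right) descent number `d(w) = |D(w)|`. -/
noncomputable def descentNumber {B W : Type*} [Group W]
    {M : CoxeterMatrix B} (cs : CoxeterSystem M W) (w : W) : ℕ :=
  Set.ncard {i : B | cs.IsRightDescent w i}

/-- The `W`-Eulerian number `⟨W,i⟩`: the number of elements of `W` with descent
number equal to `i`. -/
noncomputable def eulerianNumber {B W : Type*} [Group W]
    {M : CoxeterMatrix B} (cs : CoxeterSystem M W) (i : ℕ) : ℕ :=
  Set.ncard {w : W | descentNumber cs w = i}


set_option linter.unusedSectionVars false
set_option maxHeartbeats 1000000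

namespace CoxProof

open List
open scoped Classical

variable {B W : Type*} [Group W] {M : CoxeterMatrix B} (cs : CoxeterSystem M W)

/-- Auxiliary monoid tracking parity of inversion counts. -/
@[ext] structure Pty (W : Type*) where
  fn : W → ZMod 2
  el : W

instance : Monoid (Pty W) where
  mul a b := ⟨a.fn + fun t => b.fn (a.el⁻¹ * t * a.el), a.el * b.el⟩
  one := ⟨0, 1⟩
  mul_assoc := by
    rintro ⟨af, ae⟩ ⟨bf, be⟩ ⟨cf, ce⟩
    show Pty.mk _ _ = Pty.mk _ _
    simp only [Pty.mk.injEq]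
    constructor
    · funext t
      show (af t + bf (ae⁻¹ * t * ae)) + cf ((ae * be)⁻¹ * t * (ae * be))
          = af t + (bf (ae⁻¹ * t * ae) + cf (be⁻¹ * (ae⁻¹ * t * ae) * be))
      rw [add_assoc]
      congr 2
      group
    · exact mul_assoc _ _ _
  one_mul := by
    rintro ⟨af, ae⟩
    show Pty.mk _ _ = Pty.mk _ _
    simp only [Pty.mk.injEq]
    constructor
    · funext t
      show (0 : W → ZMod 2) t + af (1⁻¹ * t * 1) = af t
      simp
    · exact one_mul _
  mul_one := by
    rintro ⟨af, ae⟩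
    show Pty.mk _ _ = Pty.mk _ _
    simp only [Pty.mk.injEq]
    constructor
    · funext t
      show af t + (0 : W → ZMod 2) _ = af t
      simp
    · exact mul_one _

lemma Pty.mul_fn (a b : Pty W) : (a * b).fn = a.fn + fun t => b.fn (a.el⁻¹ * t * a.el) := rfl
lemma Pty.mul_el (a b : Pty W) : (a * b).el = a.el * b.el := rfl
lemma Pty.one_fn : (1 : Pty W).fn = 0 := rfl
lemma Pty.one_el : (1 : Pty W).el = 1 := rfl

lemma Pty.pow_el (a : Pty W) (n : ℕ) : (a ^ n).el = a.el ^ n := by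
  induction n with
  | zero => simp [pow_zero, Pty.one_el]
  | succ n ih => rw [pow_succ, Pty.mul_el, ih, pow_succ]

lemma Pty.pow_fn (a : Pty W) (n : ℕ) (t : W) :
    (a ^ n).fn t = ∑ k ∈ Finset.range n, a.fn ((a.el ^ k)⁻¹ * t * a.el ^ k) := by
  induction n generalizing t with
  | zero => simp [pow_zero, Pty.one_fn]
  | succ n ih =>
      rw [pow_succ, Pty.mul_fn]
      show (a ^ n).fn t + a.fn (((a^n).el)⁻¹ * t * (a^n).el) = _
      rw [Pty.pow_el, ih, Finset.sum_range_succ]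

/-- The generator images. -/
noncomputable def ptyGen (i : B) : Pty W :=
  ⟨fun t => if t = cs.simple i then 1 else 0, cs.simple i⟩

lemma sum_range_two_mul (g : ℕ → ZMod 2) (m : ℕ) :
    ∑ n ∈ Finset.range (2 * m), g n
      = ∑ k ∈ Finset.range m, (g (2 * k) + g (2 * k + 1)) := by
  induction m with
  | zero => simp
  | succ m ih =>
      rw [Finset.sum_range_succ, ← ih, Nat.mul_succ, Finset.sum_range_succ,
        Finset.sum_range_succ, add_assoc]

lemma sum_range_periodic_two (g : ℕ → ZMod 2) (m : ℕ) (hg : ∀ n, g (n + m) = g n) :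
    ∑ n ∈ Finset.range (m + m), g n = 0 := by
  have h1 : ∑ n ∈ Finset.range (m + m), g n
      = ∑ n ∈ Finset.range m, g n + ∑ n ∈ Finset.Ico m (m + m), g n := by
    rw [Finset.range_eq_Ico, ← Finset.sum_Ico_consecutive g (Nat.zero_le m) (by omega)]
    rw [Finset.range_eq_Ico]
  have h2 : ∑ n ∈ Finset.Ico m (m + m), g n = ∑ n ∈ Finset.range m, g n := by
    rw [Finset.sum_Ico_eq_sum_range]
    simp only [Nat.add_sub_cancel_left]
    exact Finset.sum_congr rfl fun n _ => by rw [add_comm]; exact hg n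
  rw [h1, h2]
  exact CharTwo.add_self_eq_zero _

lemma ptyGen_liftable : M.IsLiftable (ptyGen cs (W := W)) := by
  have conjIff : ∀ g a b : W, (g⁻¹ * a * g = b) ↔ (a = g * b * g⁻¹) := by
    intro g a b
    constructor
    · intro h; rw [← h]; group
    · intro h; rw [h]; group
  intro i j
  have hrel2 : SemiconjBy (cs.simple i) (cs.simple i * cs.simple j)⁻¹
      (cs.simple i * cs.simple j) := by
    show cs.simple i * (cs.simple i * cs.simple j)⁻¹ = cs.simple i * cs.simple j * cs.simple i
    rw [mul_inv_rev, cs.inv_simple, cs.inv_simple, ← mul_assoc, mul_assoc]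
  have hpow : (cs.simple i * cs.simple j) ^ M i j = 1 := cs.simple_mul_simple_pow i j
  have hel : (ptyGen cs i * ptyGen cs j : Pty W).el = cs.simple i * cs.simple j := rfl
  have key : ∀ k : ℕ, (cs.simple i * cs.simple j) ^ k * cs.simple i
      * ((cs.simple i * cs.simple j) ^ k)⁻¹
      = (cs.simple i * cs.simple j) ^ (2 * k) * cs.simple i := by
    intro k
    have h := (hrel2.pow_right k).eq
    calc (cs.simple i * cs.simple j) ^ k * cs.simple i * ((cs.simple i * cs.simple j) ^ k)⁻¹
        = (cs.simple i * cs.simple j) ^ k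
          * (cs.simple i * ((cs.simple i * cs.simple j)⁻¹) ^ k) := by
          rw [← inv_pow, mul_assoc]
      _ = (cs.simple i * cs.simple j) ^ k
          * ((cs.simple i * cs.simple j) ^ k * cs.simple i) := by rw [h]
      _ = (cs.simple i * cs.simple j) ^ (2 * k) * cs.simple i := by
          rw [two_mul, pow_add, mul_assoc]
  have key2 : ∀ k : ℕ, (cs.simple i * cs.simple j) ^ k
      * (cs.simple i * cs.simple j * (cs.simple i)⁻¹)
      * ((cs.simple i * cs.simple j) ^ k)⁻¹
      = (cs.simple i * cs.simple j) ^ (2 * k + 1) * cs.simple i := by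
    intro k
    rw [cs.inv_simple]
    calc (cs.simple i * cs.simple j) ^ k * (cs.simple i * cs.simple j * cs.simple i)
          * ((cs.simple i * cs.simple j) ^ k)⁻¹
        = (cs.simple i * cs.simple j) ^ (k + 1) * cs.simple i
          * ((cs.simple i * cs.simple j) ^ k)⁻¹ := by rw [pow_succ]; group
      _ = (cs.simple i * cs.simple j)
          * ((cs.simple i * cs.simple j) ^ k * cs.simple i
            * ((cs.simple i * cs.simple j) ^ k)⁻¹) := by rw [pow_succ']; group
      _ = (cs.simple i * cs.simple j)
          * ((cs.simple i * cs.simple j) ^ (2 * k) * cs.simple i) := by rw [key k]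
      _ = (cs.simple i * cs.simple j) ^ (2 * k + 1) * cs.simple i := by
          rw [pow_succ']; group
  refine Pty.ext ?_ ?_
  · funext t
    rw [Pty.pow_fn, Pty.one_fn, hel]
    have hfn : ∀ u : W, (ptyGen cs i * ptyGen cs j : Pty W).fn u
        = (if u = cs.simple i then 1 else 0)
          + (if (cs.simple i)⁻¹ * u * cs.simple i = cs.simple j then 1 else 0) := fun u => rfl
    calc ∑ k ∈ Finset.range (M i j), (ptyGen cs i * ptyGen cs j : Pty W).fn
            (((cs.simple i * cs.simple j) ^ k)⁻¹ * t * (cs.simple i * cs.simple j) ^ k)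
        = ∑ k ∈ Finset.range (M i j),
            ((if t = (cs.simple i * cs.simple j) ^ (2 * k) * cs.simple i then 1 else 0)
              + (if t = (cs.simple i * cs.simple j) ^ (2 * k + 1) * cs.simple i
                  then (1:ZMod 2) else 0)) := by
          apply Finset.sum_congr rfl
          intro k _
          rw [hfn]
          have hiff1 : (((cs.simple i * cs.simple j) ^ k)⁻¹ * t * (cs.simple i * cs.simple j) ^ k
                = cs.simple i)
              ↔ (t = (cs.simple i * cs.simple j) ^ (2 * k) * cs.simple i) := by
            rw [conjIff, key]
          have hiff2 : ((cs.simple i)⁻¹ * (((cs.simple i * cs.simple j) ^ k)⁻¹ * t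
                  * (cs.simple i * cs.simple j) ^ k) * cs.simple i = cs.simple j)
              ↔ (t = (cs.simple i * cs.simple j) ^ (2 * k + 1) * cs.simple i) := by
            rw [conjIff, conjIff, key2]
          rw [if_congr hiff1 rfl rfl, if_congr hiff2 rfl rfl]
      _ = ∑ n ∈ Finset.range (2 * (M i j)),
            (if t = (cs.simple i * cs.simple j) ^ n * cs.simple i then (1:ZMod 2) else 0) := by
          rw [sum_range_two_mul]
      _ = 0 := by
          rw [two_mul]
          apply sum_range_periodic_two
          intro n
          rw [pow_add, hpow, mul_one]
  · rw [Pty.pow_el, hel, hpow, Pty.one_el]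


/-- The parity homomorphism. -/
noncomputable def psi : W →* Pty W := cs.lift ⟨ptyGen cs, ptyGen_liftable cs⟩

/-- Parity count function of the left inversion sequence of a word. -/
noncomputable def cfn (ω : List B) : W → ZMod 2 :=
  fun t => ((cs.leftInvSeq ω).map (fun u => if t = u then (1 : ZMod 2) else 0)).sum

lemma cfn_nil : cfn cs ([] : List B) = 0 := by
  funext t; simp [cfn]

lemma cfn_eq_zero_of_not_mem {ω : List B} {t : W} (h : t ∉ cs.leftInvSeq ω) :
    cfn cs ω t = 0 := by
  apply List.sum_eq_zero
  intro x hx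
  rw [List.mem_map] at hx
  obtain ⟨u, hu, rfl⟩ := hx
  rw [if_neg]
  intro h'
  exact h (h' ▸ hu)

lemma mem_of_cfn_ne_zero {ω : List B} {t : W} (h : cfn cs ω t ≠ 0) :
    t ∈ cs.leftInvSeq ω := by
  by_contra hc
  exact h (cfn_eq_zero_of_not_mem cs hc)

lemma cfn_cons (i : B) (ω : List B) (t : W) :
    cfn cs (i :: ω) t
      = (if t = cs.simple i then 1 else 0) + cfn cs ω ((cs.simple i)⁻¹ * t * cs.simple i) := by
  have hlis : cs.leftInvSeq (i :: ω)
      = cs.simple i :: List.map (⇑(MulAut.conj (cs.simple i))) (cs.leftInvSeq ω) := rfl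
  show ((cs.leftInvSeq (i :: ω)).map (fun u => if t = u then (1:ZMod 2) else 0)).sum = _
  rw [hlis, List.map_cons, List.sum_cons, List.map_map]
  congr 1
  show _ = ((cs.leftInvSeq ω).map
      (fun u => if (cs.simple i)⁻¹ * t * cs.simple i = u then (1:ZMod 2) else 0)).sum
  congr 1
  apply List.map_congr_left
  intro u _
  simp only [Function.comp_apply, MulAut.conj_apply]
  have hiff : (t = cs.simple i * u * (cs.simple i)⁻¹)
      ↔ ((cs.simple i)⁻¹ * t * cs.simple i = u) := by
    constructor
    · intro h; rw [h]; group
    · intro h; rw [← h]; group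
  exact if_congr hiff rfl rfl

lemma psi_wordProd (ω : List B) :
    psi cs (cs.wordProd ω) = ⟨cfn cs ω, cs.wordProd ω⟩ := by
  induction ω with
  | nil =>
      rw [cs.wordProd_nil, map_one]
      refine Pty.ext ?_ ?_
      · rw [Pty.one_fn, cfn_nil]
      · rw [Pty.one_el]
  | cons i ω ih =>
      rw [cs.wordProd_cons, map_mul, ih]
      have hsimple : psi cs (cs.simple i) = ptyGen cs i := cs.lift_apply_simple _ i
      rw [hsimple]
      refine Pty.ext ?_ ?_
      · funext t
        show (if t = cs.simple i then 1 else 0) + cfn cs ω ((cs.simple i)⁻¹ * t * cs.simple i)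
            = cfn cs (i :: ω) t
        rw [cfn_cons]
      · show cs.simple i * cs.wordProd ω = cs.wordProd (i :: ω)
        rw [cs.wordProd_cons]

lemma cfn_eq_of_wordProd_eq {ω ω' : List B} (h : cs.wordProd ω = cs.wordProd ω') :
    cfn cs ω = cfn cs ω' := by
  have h1 := psi_wordProd cs ω
  have h2 := psi_wordProd cs ω'
  rw [h] at h1
  rw [h1] at h2
  exact congrArg Pty.fn h2

lemma simple_mem_leftInvSeq_of_isLeftDescent {w : W} {i : B} (hd : cs.IsLeftDescent w i)
    {ω : List B} (hω : cs.IsReduced ω) (hw : w = cs.wordProd ω) :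
    cs.simple i ∈ cs.leftInvSeq ω := by
  obtain ⟨τ, hτred, hτ⟩ := cs.exists_reduced_word' (cs.simple i * w)
  have hword : cs.wordProd (i :: τ) = w := by
    rw [cs.wordProd_cons, ← hτ, ← mul_assoc, cs.simple_mul_simple_self, one_mul]
  have hnotmem : cs.simple i ∉ cs.leftInvSeq τ := by
    intro hmem
    have := cs.isLeftInversion_of_mem_leftInvSeq hτred hmem
    rw [← hτ] at this
    have h2 := this.2
    rw [← mul_assoc, cs.simple_mul_simple_self, one_mul] at h2
    exact absurd h2 (not_lt.mpr (le_of_lt hd))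
  have hcfn : cfn cs ω (cs.simple i) = 1 := by
    have heq := cfn_eq_of_wordProd_eq cs (ω := ω) (ω' := i :: τ) (by rw [hword, ← hw])
    rw [heq, cfn_cons, if_pos rfl]
    have harg : (cs.simple i)⁻¹ * cs.simple i * cs.simple i = cs.simple i := by
      rw [cs.inv_simple, cs.simple_mul_simple_self, one_mul]
    rw [harg, cfn_eq_zero_of_not_mem cs hnotmem, add_zero]
  apply mem_of_cfn_ne_zero cs
  rw [hcfn]
  exact one_ne_zero

/-- The right exchange property. -/
lemma rightExchange {ω : List B} (hω : cs.IsReduced ω) {i : B}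
    (hd : cs.IsRightDescent (cs.wordProd ω) i) :
    ∃ j, j < ω.length ∧ cs.wordProd ω * cs.simple i = cs.wordProd (ω.eraseIdx j) := by
  have hrev : cs.IsReduced ω.reverse := (cs.isReduced_reverse_iff ω).mpr hω
  have hld : cs.IsLeftDescent (cs.wordProd ω)⁻¹ i := (cs.isLeftDescent_inv_iff).mpr hd
  have hmem : cs.simple i ∈ cs.leftInvSeq ω.reverse :=
    simple_mem_leftInvSeq_of_isLeftDescent cs hld hrev (by rw [cs.wordProd_reverse])
  rw [cs.leftInvSeq_reverse] at hmem
  rw [List.mem_reverse] at hmem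
  obtain ⟨j, hj, hget⟩ := List.mem_iff_getElem.mp hmem
  rw [cs.length_rightInvSeq] at hj
  refine ⟨j, hj, ?_⟩
  have := cs.wordProd_mul_getD_rightInvSeq ω j
  rw [List.getD_eq_getElem _ 1 (by rw [cs.length_rightInvSeq]; exact hj), hget] at this
  exact this


/-- The standard parabolic subgroup generated by `{sᵢ : i ∈ K}`. -/
def WJ (K : Set B) : Subgroup W := Subgroup.closure (cs.simple '' K)

lemma wordProd_mem_WJ {K : Set B} {l : List B} (hl : ∀ b ∈ l, b ∈ K) :
    cs.wordProd l ∈ WJ cs K := by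
  induction l with
  | nil => rw [cs.wordProd_nil]; exact one_mem _
  | cons i l ih =>
      rw [cs.wordProd_cons]
      exact mul_mem (Subgroup.subset_closure ⟨i, hl i mem_cons_self, rfl⟩)
        (ih fun b hb => hl b (mem_cons_of_mem i hb))

lemma mem_WJ_iff {K : Set B} {u : W} :
    u ∈ WJ cs K ↔ ∃ l : List B, (∀ b ∈ l, b ∈ K) ∧ u = cs.wordProd l := by
  constructor
  · intro hu
    induction hu using Subgroup.closure_induction with
    | mem x hx =>
        obtain ⟨i, hi, rfl⟩ := hx
        exact ⟨[i], by simpa using hi, by rw [cs.wordProd_singleton]⟩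
    | one => exact ⟨[], by simp, by rw [cs.wordProd_nil]⟩
    | mul x y _ _ hx hy =>
        obtain ⟨l₁, h₁, rfl⟩ := hx
        obtain ⟨l₂, h₂, rfl⟩ := hy
        exact ⟨l₁ ++ l₂, fun b hb => ((List.mem_append.mp hb).elim (h₁ b) (h₂ b)),
          by rw [cs.wordProd_append]⟩
    | inv x _ hx =>
        obtain ⟨l, h, rfl⟩ := hx
        exact ⟨l.reverse, fun b hb => h b (List.mem_reverse.mp hb),
          by rw [cs.wordProd_reverse]⟩
  · rintro ⟨l, hl, rfl⟩
    exact wordProd_mem_WJ cs hl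

/-- Every element of a standard parabolic subgroup has a reduced word all of whose
letters lie in `K`. -/
lemma exists_reduced_word_K_aux {K : Set B} :
    ∀ n, ∀ l : List B, l.length ≤ n → (∀ b ∈ l, b ∈ K) →
      ∃ τ : List B, cs.IsReduced τ ∧ (∀ b ∈ τ, b ∈ K) ∧ cs.wordProd l = cs.wordProd τ := by
  intro n
  induction n with
  | zero =>
      intro l hlen _
      have : l = [] := List.length_eq_zero_iff.mp (Nat.le_zero.mp hlen)
      subst this
      exact ⟨[], by simp [CoxeterSystem.IsReduced], by simp, rfl⟩
  | succ n ih =>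
      intro l hlen hl
      by_cases hred : cs.IsReduced l
      · exact ⟨l, hred, hl, rfl⟩
      rcases List.eq_nil_or_concat l with rfl | ⟨l₀, i, rfl⟩
      · exact absurd (by simp [CoxeterSystem.IsReduced]) hred
      have hlconcat : (l₀.concat i).length = l₀.length + 1 := by
        simp [List.concat_eq_append]
      have hl₀len : l₀.length ≤ n := by omega
      have hl₀ : ∀ b ∈ l₀, b ∈ K := fun b hb => hl b (by simp [List.concat_eq_append, hb])
      have hiK : i ∈ K := hl i (by simp [List.concat_eq_append])
      by_cases hred₀ : cs.IsReduced l₀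
      · by_cases hdesc : cs.IsRightDescent (cs.wordProd l₀) i
        · obtain ⟨j, hj, heq⟩ := rightExchange cs hred₀ hdesc
          obtain ⟨τ, h1, h2, h3⟩ := ih (l₀.eraseIdx j)
            (by rw [List.length_eraseIdx_of_lt hj]; omega)
            (fun b hb => hl₀ b (List.mem_of_mem_eraseIdx hb))
          exact ⟨τ, h1, h2, by rw [cs.wordProd_concat, heq, h3]⟩
        · exfalso
          apply hred
          show cs.length (cs.wordProd (l₀.concat i)) = (l₀.concat i).length
          rw [cs.wordProd_concat, hlconcat]
          rcases cs.length_mul_simple (cs.wordProd l₀) i with h | h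
          · rw [h, hred₀]
          · exfalso
            apply hdesc
            show cs.length _ < cs.length _
            omega
      · obtain ⟨τ, h1, h2, h3⟩ := ih l₀ hl₀len hl₀
        have hτlt : τ.length < l₀.length := by
          have hle := cs.length_wordProd_le l₀
          have hne : cs.length (cs.wordProd l₀) ≠ l₀.length := hred₀
          have hτ : cs.length (cs.wordProd τ) = τ.length := h1
          rw [← h3] at hτ
          omega
        obtain ⟨τ', h1', h2', h3'⟩ := ih (τ.concat i)
          (by simp only [List.concat_eq_append, List.length_append, List.length_cons,
                List.length_nil]; omega)
          (fun b hb => by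
            rw [List.concat_eq_append, List.mem_append] at hb
            rcases hb with hb | hb
            · exact h2 b hb
            · rw [List.mem_singleton] at hb; subst hb; exact hiK)
        refine ⟨τ', h1', h2', ?_⟩
        rw [cs.wordProd_concat, h3, ← cs.wordProd_concat, h3']

lemma exists_reduced_word_K {K : Set B} {u : W} (hu : u ∈ WJ cs K) :
    ∃ τ : List B, cs.IsReduced τ ∧ (∀ b ∈ τ, b ∈ K) ∧ u = cs.wordProd τ := by
  obtain ⟨l, hl, rfl⟩ := (mem_WJ_iff cs).mp hu
  obtain ⟨τ, h1, h2, h3⟩ := exists_reduced_word_K_aux cs l.length l (le_refl _) hl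
  exact ⟨τ, h1, h2, h3⟩

/-- A nontrivial element of a standard parabolic has a right descent in `K`. -/
lemma exists_rightDescent_in_K {K : Set B} {u : W} (hu : u ∈ WJ cs K) (hne : u ≠ 1) :
    ∃ i ∈ K, cs.IsRightDescent u i := by
  obtain ⟨τ, hred, hK, rfl⟩ := exists_reduced_word_K cs hu
  rcases List.eq_nil_or_concat τ with rfl | ⟨τ₀, i, rfl⟩
  · exact absurd (by rw [cs.wordProd_nil]) hne
  refine ⟨i, hK i (by simp [List.concat_eq_append]), ?_⟩
  show cs.length (cs.wordProd (τ₀.concat i) * cs.simple i) < cs.length (cs.wordProd (τ₀.concat i))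
  have h2 : cs.length (cs.wordProd (τ₀.concat i)) = (τ₀.concat i).length := hred
  rw [List.length_concat] at h2
  have h1 : cs.length (cs.wordProd τ₀) ≤ τ₀.length := cs.length_wordProd_le τ₀
  rw [cs.wordProd_concat, mul_assoc, cs.simple_mul_simple_self, mul_one]
  rw [cs.wordProd_concat] at h2
  omega

/-- Key length-additivity for minimal coset representatives. -/
lemma length_add_of_min {K : Set B} {w : W}
    (hmin : ∀ u ∈ WJ cs K, cs.length w ≤ cs.length (w * u)) :
    ∀ u ∈ WJ cs K, cs.length (w * u) = cs.length w + cs.length u := by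
  intro u hu
  obtain ⟨τ, hred, hK, rfl⟩ := exists_reduced_word_K cs hu
  rw [hred]
  clear hu
  induction τ using List.reverseRecOn with
  | nil => simp
  | append_singleton τ₀ i ih =>
      have hτ₀red : cs.IsReduced τ₀ := by
        have := hred.take τ₀.length
        rwa [List.take_left] at this
      have hτ₀K : ∀ b ∈ τ₀, b ∈ K := fun b hb => hK b (List.mem_append_left _ hb)
      have hiK : i ∈ K := hK i (List.mem_append_right _ (List.mem_singleton_self i))
      have ih' := ih hτ₀red hτ₀K
      have hπ : cs.wordProd (τ₀ ++ [i]) = cs.wordProd τ₀ * cs.simple i := by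
        rw [cs.wordProd_append, cs.wordProd_singleton]
      rw [hπ, ← mul_assoc]
      simp only [List.length_append, List.length_singleton]
      rcases cs.length_mul_simple (w * cs.wordProd τ₀) i with h | h
      · rw [h, ih']
        omega
      · -- descent case: contradiction
        exfalso
        obtain ⟨ρ, hρlen, hρ⟩ : ∃ ρ : List B, ρ.length = cs.length w ∧ w = cs.wordProd ρ := by
            obtain ⟨ρ, h1, h2⟩ := cs.exists_isReduced w
            exact ⟨ρ, by rw [h2]; exact h1.symm, h2⟩
        have hconcat_red : cs.IsReduced (ρ ++ τ₀) := by
          show cs.length (cs.wordProd (ρ ++ τ₀)) = _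
          rw [cs.wordProd_append, ← hρ, List.length_append, hρlen, ih']
        have hdesc : cs.IsRightDescent (cs.wordProd (ρ ++ τ₀)) i := by
          show cs.length _ < cs.length _
          rw [cs.wordProd_append, ← hρ]
          omega
        obtain ⟨j, hj, heq⟩ := rightExchange cs hconcat_red hdesc
        rw [List.length_append] at hj
        rcases lt_or_ge j ρ.length with hjρ | hjρ
        · -- the erased letter is in ρ: contradicts minimality
          rw [List.eraseIdx_append_of_lt_length hjρ] at heq
          rw [cs.wordProd_append, ← hρ] at heq
          have hu'' : cs.wordProd τ₀ * cs.simple i * (cs.wordProd τ₀)⁻¹ ∈ WJ cs K := by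
            refine mul_mem (mul_mem (wordProd_mem_WJ cs hτ₀K)
              (Subgroup.subset_closure ⟨i, hiK, rfl⟩)) (inv_mem (wordProd_mem_WJ cs hτ₀K))
          have hwu'' : w * (cs.wordProd τ₀ * cs.simple i * (cs.wordProd τ₀)⁻¹)
              = cs.wordProd (ρ.eraseIdx j ++ τ₀) * (cs.wordProd τ₀)⁻¹ := by
            rw [← heq]; group
          have hval : cs.length (w * (cs.wordProd τ₀ * cs.simple i * (cs.wordProd τ₀)⁻¹))
              ≤ ρ.length - 1 := by
            rw [hwu'']
            rw [cs.wordProd_append, mul_assoc, mul_inv_cancel, mul_one]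
            calc cs.length (cs.wordProd (ρ.eraseIdx j)) ≤ (ρ.eraseIdx j).length :=
                  cs.length_wordProd_le _
              _ = ρ.length - 1 := by rw [List.length_eraseIdx_of_lt hjρ]
          have := hmin _ hu''
          omega
        · -- the erased letter is in τ₀: contradicts reducedness of τ₀ ++ [i]
          rw [List.eraseIdx_append_of_length_le hjρ] at heq
          rw [cs.wordProd_append (ρ) (τ₀.eraseIdx (j - ρ.length)), ← hρ,
            cs.wordProd_append, ← hρ] at heq
          have heq2 : cs.wordProd τ₀ * cs.simple i = cs.wordProd (τ₀.eraseIdx (j - ρ.length)) := by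
            rw [mul_assoc] at heq
            exact mul_left_cancel heq
          have hlt : cs.length (cs.wordProd (τ₀ ++ [i])) ≤ τ₀.length - 1 := by
            rw [hπ, heq2]
            calc cs.length (cs.wordProd (τ₀.eraseIdx (j - ρ.length)))
                ≤ (τ₀.eraseIdx (j - ρ.length)).length := cs.length_wordProd_le _
              _ ≤ τ₀.length - 1 := by
                  rw [List.length_eraseIdx_of_lt (by omega)]
          have hred' : cs.length (cs.wordProd (τ₀ ++ [i])) = τ₀.length + 1 := by
            rw [hred]; simp
          omega


variable [Fintype W]

lemma length_add_of_noDescent {K : Set B} {w : W}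
    (hnd : ∀ i ∈ K, ¬ cs.IsRightDescent w i) :
    ∀ u ∈ WJ cs K, cs.length (w * u) = cs.length w + cs.length u := by
  have hSne : (Finset.univ.filter (· ∈ WJ cs K)).Nonempty :=
    ⟨1, by simp [one_mem]⟩
  obtain ⟨u₀, hu₀S, hu₀min⟩ := Finset.exists_min_image _ (fun u => cs.length (w * u)) hSne
  rw [Finset.mem_filter] at hu₀S
  have hu₀ : u₀ ∈ WJ cs K := hu₀S.2
  have hmin : ∀ u ∈ WJ cs K, cs.length (w * u₀) ≤ cs.length (w * u₀ * u) := by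
    intro u hu
    rw [mul_assoc]
    exact hu₀min _ (Finset.mem_filter.mpr ⟨Finset.mem_univ _, mul_mem hu₀ hu⟩)
  have key := length_add_of_min cs hmin
  have hu₀one : u₀ = 1 := by
    by_contra hne
    obtain ⟨i, hiK, hdesc⟩ := exists_rightDescent_in_K cs (inv_mem hu₀) (inv_ne_one.mpr hne)
    apply hnd i hiK
    show cs.length (w * cs.simple i) < cs.length w
    have e1 : w * cs.simple i = w * u₀ * (u₀⁻¹ * cs.simple i) := by group
    have e2 : w = w * u₀ * u₀⁻¹ := by group
    have m1 : u₀⁻¹ * cs.simple i ∈ WJ cs K :=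
      mul_mem (inv_mem hu₀) (Subgroup.subset_closure ⟨i, hiK, rfl⟩)
    have m2 : u₀⁻¹ ∈ WJ cs K := inv_mem hu₀
    rw [e1]
    nth_rewrite 2 [e2]
    rw [key _ m1, key _ m2]
    have : cs.length (u₀⁻¹ * cs.simple i) < cs.length u₀⁻¹ := hdesc
    omega
  rw [hu₀one, mul_one] at hmin
  exact length_add_of_min cs hmin

/-- Minimality and uniqueness of the representative with no descents in `K`. -/
lemma min_of_noDescent {K : Set B} {w : W} (hnd : ∀ i ∈ K, ¬ cs.IsRightDescent w i)
    {v : W} (hv : v ∈ w • ((WJ cs K : Subgroup W) : Set W)) :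
    cs.length w ≤ cs.length v ∧ (cs.length v ≤ cs.length w → v = w) := by
  rw [mem_leftCoset_iff, SetLike.mem_coe] at hv
  have hkey := length_add_of_noDescent cs hnd _ hv
  rw [mul_inv_cancel_left] at hkey
  constructor
  · omega
  · intro hle
    have : cs.length (w⁻¹ * v) = 0 := by omega
    have h1 : w⁻¹ * v = 1 := cs.length_eq_zero_iff.mp this
    calc v = w * (w⁻¹ * v) := by group
      _ = w := by rw [h1, mul_one]
    
/-- Every coset of a standard parabolic has a representative without descents in `K`. -/
lemma exists_noDescent_rep (x : W) (K : Set B) :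
    ∃ u : W, (∀ i ∈ K, ¬ cs.IsRightDescent u i)
      ∧ u • ((WJ cs K : Subgroup W) : Set W) = x • ((WJ cs K : Subgroup W) : Set W) := by
  have hSne : (Finset.univ.filter (· ∈ x • ((WJ cs K : Subgroup W) : Set W))).Nonempty :=
    ⟨x, by simp [Finset.mem_filter, mem_leftCoset_iff, one_mem]⟩
  obtain ⟨u, huS, humin⟩ := Finset.exists_min_image _ (fun v => cs.length v) hSne
  rw [Finset.mem_filter] at huS
  have hu : u ∈ x • ((WJ cs K : Subgroup W) : Set W) := huS.2
  refine ⟨u, ?_, ?_⟩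
  · intro i hiK hdesc
    have hmem : u * cs.simple i ∈ x • ((WJ cs K : Subgroup W) : Set W) := by
      rw [mem_leftCoset_iff] at hu ⊢
      rw [SetLike.mem_coe] at hu ⊢
      rw [← mul_assoc]
      exact mul_mem hu (Subgroup.subset_closure ⟨i, hiK, rfl⟩)
    have := humin _ (Finset.mem_filter.mpr ⟨Finset.mem_univ _, hmem⟩)
    exact absurd hdesc (not_lt.mpr this)
  · rw [mem_leftCoset_iff] at hu
    rw [leftCoset_eq_iff]
    have := inv_mem (SetLike.mem_coe.mp hu)
    rwa [mul_inv_rev, inv_inv] at this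


/-- Decomposition of the indicator function of a coset of `G` into indicators of
cosets of a smaller subgroup `H ≤ G`. -/
lemma indicator_coset_decomp {H G : Subgroup W} (hHG : H ≤ G) (x : W) :
    Set.indicator (x • (G : Set W)) (fun _ => (1 : ZMod 2))
      = ∑ t ∈ (Finset.univ.filter (· ∈ x • (G : Set W))).image (fun y => y • (H : Set W)),
          Set.indicator t (fun _ => 1) := by
  funext v
  rw [Finset.sum_apply]
  by_cases hv : v ∈ x • (G : Set W)
  · rw [Set.indicator_of_mem hv]
    have hself : v ∈ v • (H : Set W) := by
      rw [mem_leftCoset_iff, inv_mul_cancel]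
      exact SetLike.mem_coe.mpr (one_mem H)
    have hmem1 : v • (H : Set W)
        ∈ (Finset.univ.filter (· ∈ x • (G : Set W))).image (fun y => y • (H : Set W)) :=
      Finset.mem_image_of_mem _ (Finset.mem_filter.mpr ⟨Finset.mem_univ _, hv⟩)
    have hothers : ∀ t ∈ (Finset.univ.filter (· ∈ x • (G : Set W))).image
        (fun y => y • (H : Set W)), t ≠ v • (H : Set W) →
        Set.indicator t (fun _ => (1 : ZMod 2)) v = 0 := by
      intro t ht htne
      obtain ⟨y, hy, rfl⟩ := Finset.mem_image.mp ht
      apply Set.indicator_of_notMem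
      intro hmem
      apply htne
      rw [mem_leftCoset_iff] at hmem
      exact (leftCoset_eq_iff H).mpr (SetLike.mem_coe.mp hmem)
    rw [Finset.sum_eq_single_of_mem (v • (H : Set W)) hmem1 hothers,
      Set.indicator_of_mem hself]
  · rw [Set.indicator_of_notMem hv]
    symm
    apply Finset.sum_eq_zero
    intro t ht
    obtain ⟨y, hy, rfl⟩ := Finset.mem_image.mp ht
    apply Set.indicator_of_notMem
    intro hmem
    apply hv
    rw [Finset.mem_filter] at hy
    have hyG : x⁻¹ * y ∈ G := (mem_leftCoset_iff x).mp hy.2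
    rw [mem_leftCoset_iff] at hmem ⊢
    rw [SetLike.mem_coe] at *
    have : x⁻¹ * v = (x⁻¹ * y) * (y⁻¹ * v) := by group
    rw [this]
    exact mul_mem hyG (hHG hmem)


section Ext
variable [Fintype B]

/-- The non-descent set of `w`. -/
def ND (w : W) : Set B := {i : B | ¬ cs.IsRightDescent w i}

lemma coxeterExtension_def (w : W) :
    coxeterExtension cs w = Set.indicator (w • ((WJ cs (ND cs w) : Subgroup W) : Set W))
      (fun _ => 1) := rfl

lemma nd_noDescent (w : W) : ∀ i ∈ ND cs w, ¬ cs.IsRightDescent w i := fun _ hi => hi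

lemma coxeterExtension_self (w : W) : coxeterExtension cs w w = 1 := by
  rw [coxeterExtension_def]
  apply Set.indicator_of_mem
  rw [mem_leftCoset_iff, inv_mul_cancel]
  exact SetLike.mem_coe.mpr (one_mem _)

lemma coxeterExtension_min {w v : W} (h : coxeterExtension cs w v ≠ 0) :
    cs.length w ≤ cs.length v ∧ (cs.length v ≤ cs.length w → v = w) := by
  rw [coxeterExtension_def] at h
  have hv : v ∈ w • ((WJ cs (ND cs w) : Subgroup W) : Set W) := by
    by_contra hc
    exact h (Set.indicator_of_notMem hc _)
  exact min_of_noDescent cs (nd_noDescent cs w) hv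

lemma coxeterExtension_linearIndependent :
    LinearIndependent (ZMod 2) (fun w : W => coxeterExtension cs w) := by
  rw [Fintype.linearIndependent_iff]
  intro g hg
  by_contra hc
  push_neg at hc
  have hne : (Finset.univ.filter (fun w => g w ≠ 0)).Nonempty := by
    obtain ⟨w, hw⟩ := hc
    exact ⟨w, Finset.mem_filter.mpr ⟨Finset.mem_univ _, hw⟩⟩
  obtain ⟨w, hwS, hwmin⟩ := Finset.exists_min_image _ (fun v => cs.length v) hne
  rw [Finset.mem_filter] at hwS
  have := congrFun hg w
  rw [Finset.sum_apply] at this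
  rw [Finset.sum_eq_single_of_mem w (Finset.mem_univ w)] at this
  · rw [Pi.smul_apply, coxeterExtension_self, smul_eq_mul, mul_one] at this
    exact hwS.2 this
  · intro v _ hvw
    rw [Pi.smul_apply, smul_eq_mul]
    by_cases hgv : g v = 0
    · rw [hgv, zero_mul]
    · by_cases hEv : coxeterExtension cs v w = 0
      · rw [hEv, mul_zero]
      · exfalso
        obtain ⟨hle, heq⟩ := coxeterExtension_min cs hEv
        have hmin := hwmin v (Finset.mem_filter.mpr ⟨Finset.mem_univ _, hgv⟩)
        exact hvw (heq (by omega)).symm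

lemma coxeterExtension_injective : Function.Injective (coxeterExtension cs) := by
  intro w v h
  have h1 : coxeterExtension cs w v ≠ 0 := by
    rw [h, coxeterExtension_self]; exact one_ne_zero
  have h2 : coxeterExtension cs v w ≠ 0 := by
    rw [← h, coxeterExtension_self]; exact one_ne_zero
  obtain ⟨hle1, _⟩ := coxeterExtension_min cs h1
  obtain ⟨hle2, heq2⟩ := coxeterExtension_min cs h2
  exact heq2 hle1

lemma descentNumber_eq (w : W) :
    descentNumber cs w = ({i : B | cs.IsRightDescent w i}).toFinset.card :=
  Set.ncard_eq_toFinset_card' _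

lemma nd_card (w : W) :
    ((ND cs w).toFinset.card : ℤ) = (Fintype.card B : ℤ) - descentNumber cs w := by
  rw [descentNumber_eq]
  have hcompl : (ND cs w).toFinset = ({i : B | cs.IsRightDescent w i}).toFinset ᶜ := by
    ext i
    rw [Finset.mem_compl, Set.mem_toFinset, Set.mem_toFinset]
    simp [ND]
  rw [hcompl, Finset.card_compl]
  have := Finset.card_le_univ ({i : B | cs.IsRightDescent w i}).toFinset
  omega

lemma descentNumber_le (w : W) : descentNumber cs w ≤ Fintype.card B := by
  rw [descentNumber_eq]
  exact Finset.card_le_univ _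


lemma descentNumber_le_of_nd {u : W} {J : Finset B}
    (hu : ∀ i ∈ (↑J : Set B), ¬ cs.IsRightDescent u i) :
    (descentNumber cs u : ℤ) ≤ (Fintype.card B : ℤ) - J.card := by
  have hsub : ({i : B | cs.IsRightDescent u i}).toFinset ⊆ Jᶜ := by
    intro i hi
    rw [Set.mem_toFinset] at hi
    rw [Finset.mem_compl]
    intro hiJ
    exact hu i hiJ hi
  have h1 := Finset.card_le_card hsub
  rw [Finset.card_compl] at h1
  have h2 := Finset.card_le_univ J
  rw [descentNumber_eq]
  omega

/-- Main induction: the indicator of a coset of a rank `m - r` standard parabolic lies in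
the span of the extensions `E_w`, `d(w) ≤ r`. -/
lemma coset_ind_mem (r : ℤ) (J : Finset B)
    (hJcard : (J.card : ℤ) = (Fintype.card B : ℤ) - r) :
    ∀ n : ℕ, ∀ u : W, (∀ i ∈ (↑J : Set B), ¬ cs.IsRightDescent u i) →
      (Finset.univ.filter (fun v => cs.length u < cs.length v)).card < n →
      Set.indicator (u • ((WJ cs (↑J : Set B) : Subgroup W) : Set W)) (fun _ => (1 : ZMod 2))
        ∈ Submodule.span (ZMod 2)
            {f | ∃ w : W, (descentNumber cs w : ℤ) ≤ r ∧ f = coxeterExtension cs w} := by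
  intro n
  induction n with
  | zero => intro u _ h; omega
  | succ n ih =>
      intro u hu hcard
      have hJK : (↑J : Set B) ⊆ ND cs u := fun i hi => hu i hi
      have hHG : WJ cs (↑J : Set B) ≤ WJ cs (ND cs u) :=
        Subgroup.closure_mono (Set.image_mono hJK)
      have hsum : coxeterExtension cs u
          = ∑ t ∈ (Finset.univ.filter (· ∈ u • ((WJ cs (ND cs u) : Subgroup W) : Set W))).image
              (fun y => y • ((WJ cs (↑J : Set B) : Subgroup W) : Set W)),
              Set.indicator t (fun _ => 1) := by
        rw [coxeterExtension_def, indicator_coset_decomp hHG u]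
      set T := (Finset.univ.filter (· ∈ u • ((WJ cs (ND cs u) : Subgroup W) : Set W))).image
          (fun y => y • ((WJ cs (↑J : Set B) : Subgroup W) : Set W)) with hT
      have huG : u ∈ u • ((WJ cs (ND cs u) : Subgroup W) : Set W) := by
        rw [mem_leftCoset_iff, inv_mul_cancel]
        exact SetLike.mem_coe.mpr (one_mem _)
      have huT : u • ((WJ cs (↑J : Set B) : Subgroup W) : Set W) ∈ T :=
        Finset.mem_image_of_mem _ (Finset.mem_filter.mpr ⟨Finset.mem_univ _, huG⟩)
      have hEmem : coxeterExtension cs u ∈ Submodule.span (ZMod 2)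
          {f | ∃ w : W, (descentNumber cs w : ℤ) ≤ r ∧ f = coxeterExtension cs w} := by
        apply Submodule.subset_span
        refine ⟨u, ?_, rfl⟩
        have := descentNumber_le_of_nd cs hu
        omega
      have hind_eq : Set.indicator (u • ((WJ cs (↑J : Set B) : Subgroup W) : Set W))
            (fun _ => (1 : ZMod 2))
          = coxeterExtension cs u
            - ∑ t ∈ T.erase (u • ((WJ cs (↑J : Set B) : Subgroup W) : Set W)),
                Set.indicator t (fun _ => 1) := by
        rw [hsum, ← Finset.add_sum_erase _ _ huT]
        abel
      rw [hind_eq]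
      apply sub_mem hEmem
      apply Submodule.sum_mem
      intro t ht
      rw [Finset.mem_erase] at ht
      obtain ⟨htne, htT⟩ := ht
      obtain ⟨y, hy, rfl⟩ := Finset.mem_image.mp htT
      rw [Finset.mem_filter] at hy
      obtain ⟨u', hu'nd, hu'coset⟩ := exists_noDescent_rep cs y (↑J : Set B)
      rw [← hu'coset]
      rw [← hu'coset] at htne
      -- `u'` lies in `u • W_{ND u}`, strictly longer than `u`
      have hu'G : u' ∈ u • ((WJ cs (ND cs u) : Subgroup W) : Set W) := by
        have hu'y : y⁻¹ * u' ∈ WJ cs (↑J : Set B) := by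
          have : u' ∈ u' • ((WJ cs (↑J : Set B) : Subgroup W) : Set W) := by
            rw [mem_leftCoset_iff, inv_mul_cancel]
            exact SetLike.mem_coe.mpr (one_mem _)
          rw [hu'coset, mem_leftCoset_iff] at this
          exact SetLike.mem_coe.mp this
        have hyG : u⁻¹ * y ∈ WJ cs (ND cs u) := SetLike.mem_coe.mp ((mem_leftCoset_iff u).mp hy.2)
        rw [mem_leftCoset_iff]
        have : u⁻¹ * u' = (u⁻¹ * y) * (y⁻¹ * u') := by group
        rw [SetLike.mem_coe, this]
        exact mul_mem hyG (hHG hu'y)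
      have hlen : cs.length u < cs.length u' := by
        have hg : u⁻¹ * u' ∈ WJ cs (ND cs u) := SetLike.mem_coe.mp ((mem_leftCoset_iff u).mp hu'G)
        have hadd := length_add_of_noDescent cs (fun i hi => hi) _ hg
        rw [mul_inv_cancel_left] at hadd
        have hgne : u⁻¹ * u' ≠ 1 := by
          intro hone
          apply htne
          have : u' = u := by
            calc u' = u * (u⁻¹ * u') := by group
              _ = u := by rw [hone, mul_one]
          rw [this]
        have : cs.length (u⁻¹ * u') ≠ 0 := fun h0 => hgne (cs.length_eq_zero_iff.mp h0)
        omega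
      have hcard' : (Finset.univ.filter (fun v => cs.length u' < cs.length v)).card < n := by
        have hss : (Finset.univ.filter (fun v => cs.length u' < cs.length v))
            ⊂ (Finset.univ.filter (fun v => cs.length u < cs.length v)) := by
          constructor
          · intro v hv
            rw [Finset.mem_filter] at hv ⊢
            exact ⟨Finset.mem_univ _, by omega⟩
          · intro hsub
            have := hsub (Finset.mem_filter.mpr ⟨Finset.mem_univ u', hlen⟩)
            rw [Finset.mem_filter] at this
            omega
        have := Finset.card_lt_card hss
        omega
      exact ih u' hu'nd hcard'


end Ext
end CoxProof

open CoxProof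

/-- the extensions `E_w` with `d(w) ≤ r` form a basis of `C_W(r)`;
in particular `C_W(r)` equals their span and `dim C_W(r) = ∑_{i=0}^r ⟨W,i⟩`. -/
theorem coxeterCode_eq_span_extensions {B W : Type*} [Fintype B] [Group W] [Fintype W]
    {M : CoxeterMatrix B} (cs : CoxeterSystem M W) (r : ℤ)
    (h₁ : -1 ≤ r) (h₂ : r ≤ (Fintype.card B : ℤ)) :
    coxeterCode cs r =
      Submodule.span (ZMod 2)
        {f | ∃ w : W, (descentNumber cs w : ℤ) ≤ r ∧ f = coxeterExtension cs w} ∧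
    Module.finrank (ZMod 2) ↥(coxeterCode cs r) =
      ∑ i ∈ Finset.range (Fintype.card B + 1),
        if (i : ℤ) ≤ r then eulerianNumber cs i else 0 := by
  classical
  have hspan : coxeterCode cs r =
      Submodule.span (ZMod 2)
        {f | ∃ w : W, (descentNumber cs w : ℤ) ≤ r ∧ f = coxeterExtension cs w} := by
    apply _root_.le_antisymm
    · rw [coxeterCode]
      rw [Submodule.span_le]
      rintro f ⟨x, J, hJcard, rfl⟩
      obtain ⟨u, hund, hucoset⟩ := exists_noDescent_rep cs x (↑J : Set B)
      have : (Subgroup.closure (cs.simple '' (↑J : Set B)) : Set W) = ((WJ cs (↑J : Set B) : Subgroup W) : Set W) := rfl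
      rw [this, ← hucoset]
      exact SetLike.mem_coe.mpr (coset_ind_mem cs r J hJcard
        ((Finset.univ.filter (fun v => cs.length u < cs.length v)).card + 1) u hund (by omega))
    · rw [Submodule.span_le]
      rintro f ⟨w, hdw, rfl⟩
      -- choose J inside the non-descent set with the right cardinality
      have hndcard := nd_card cs w
      have hc0 : (0 : ℤ) ≤ (Fintype.card B : ℤ) - r := by omega
      set c : ℕ := ((Fintype.card B : ℤ) - r).toNat with hc
      have hcz : (c : ℤ) = (Fintype.card B : ℤ) - r := Int.toNat_of_nonneg hc0
      have hcle : c ≤ (ND cs w).toFinset.card := by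
        have : (c : ℤ) ≤ ((ND cs w).toFinset.card : ℤ) := by omega
        exact_mod_cast this
      obtain ⟨J, hJsub, hJcard⟩ := Finset.exists_subset_card_eq hcle
      have hJK : (↑J : Set B) ⊆ ND cs w := by
        intro i hi
        have := hJsub hi
        rwa [Set.mem_toFinset] at this
      have hHG : WJ cs (↑J : Set B) ≤ WJ cs (ND cs w) :=
        Subgroup.closure_mono (Set.image_mono hJK)
      rw [coxeterExtension_def cs w, indicator_coset_decomp hHG w, coxeterCode]
      apply Submodule.sum_mem
      intro t ht
      obtain ⟨y, hy, rfl⟩ := Finset.mem_image.mp ht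
      apply Submodule.subset_span
      exact ⟨y, J, by rw [hJcard]; exact hcz, rfl⟩
  refine ⟨hspan, ?_⟩
  rw [hspan]
  have himg : {f | ∃ w : W, (descentNumber cs w : ℤ) ≤ r ∧ f = coxeterExtension cs w}
      = coxeterExtension cs '' {w : W | (descentNumber cs w : ℤ) ≤ r} := by
    ext f
    constructor
    · rintro ⟨w, h, rfl⟩; exact ⟨w, h, rfl⟩
    · rintro ⟨w, h, rfl⟩; exact ⟨w, h, rfl⟩
  rw [himg]
  have hli_sub : LinearIndependent (ZMod 2)
      (fun x : {w : W | (descentNumber cs w : ℤ) ≤ r} => coxeterExtension cs x) :=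
    (coxeterExtension_linearIndependent cs).comp _ Subtype.val_injective
  have hli_img : LinearIndependent (ZMod 2)
      ((↑) : (coxeterExtension cs '' {w : W | (descentNumber cs w : ℤ) ≤ r}) → (W → ZMod 2)) :=
    (linearIndepOn_iff_image ((coxeterExtension_injective cs).injOn)).mp hli_sub
  rw [finrank_span_set_eq_card hli_img]
  rw [Set.toFinset_image, Finset.card_image_of_injective _ (coxeterExtension_injective cs)]
  -- counting
  rw [Set.toFinset_setOf]
  rw [Finset.card_eq_sum_card_fiberwise
    (f := fun w => descentNumber cs w) (t := Finset.range (Fintype.card B + 1))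
    (fun x _ => Finset.mem_range.mpr (Nat.lt_succ_of_le (descentNumber_le cs x)))]
  apply Finset.sum_congr rfl
  intro i _
  by_cases hir : (i : ℤ) ≤ r
  · rw [if_pos hir]
    have : eulerianNumber cs i
        = (Finset.univ.filter (fun w : W => descentNumber cs w = i)).card := by
      rw [eulerianNumber, Set.ncard_eq_toFinset_card', Set.toFinset_setOf]
    rw [this]
    congr 1
    ext w
    simp only [Finset.mem_filter, Finset.mem_univ, true_and]
    constructor
    · rintro ⟨_, h⟩; exact h
    · intro h; exact ⟨by rw [h]; exact hir, h⟩
  · rw [if_neg hir]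
    rw [Finset.card_eq_zero, Finset.filter_eq_empty_iff]
    intro w hw hcon
    rw [Finset.mem_filter] at hw
    rw [hcon] at hw
    exact hir hw.2
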